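/- With the vectors f_{nm} of the previous construction and S = ∑_{n,m=1}^d p_{nm}|f_{nm}⟩⟨f_{nm}| (which is positive definite, hence invertible), define M_{nm} = p_{nm} |S^{-1/2} f_{nm}⟩⟨S^{-1/2} f_{nm}|. Then (M_{nm})_{n,m=1}^d is a POVM on ℂ^d (∑ M_{nm} = I) with d² rank-1 effects that is both extreme and informationally complete. -/

import Mathlib

open Matrix
open scoped ComplexOrder

section PovmAux

variable {d : ℕ}

lemma povmAux_conj (T : Matrix (Fin d) (Fin d) ℂ) (hTh : Tᴴ = T) (v : Fin d → ℂ) :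
    vecMulVec (T *ᵥ v) (star (T *ᵥ v)) = T * vecMulVec v (star v) * T := by
  rw [vecMulVec_eq (ι := Unit), vecMulVec_eq (ι := Unit), star_mulVec, replicateCol_mulVec, replicateRow_vecMul,
    hTh]
  simp [Matrix.mul_assoc]

lemma povmAux_quad (v x : Fin d → ℂ) :
    star x ⬝ᵥ (vecMulVec v (star v)) *ᵥ x = (star v ⬝ᵥ x) * star (star v ⬝ᵥ x) := by
  have h : vecMulVec v (star v) *ᵥ x = (star v ⬝ᵥ x) • v := by
    ext i
    simp [mulVec, vecMulVec_apply, dotProduct, Finset.mul_sum, Finset.sum_mul, mul_comm,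
      mul_left_comm, mul_assoc]
  rw [h, dotProduct_smul, star_dotProduct]
  simp [mul_comm, smul_eq_mul]

lemma povmAux_herm (v : Fin d → ℂ) : (vecMulVec v (star v))ᴴ = vecMulVec v (star v) := by
  ext i j
  simp [conjTranspose_apply, vecMulVec_apply, mul_comm]

lemma povmAux_Eaa (a : Fin d) :
    vecMulVec (Pi.single a 1 : Fin d → ℂ) (star (Pi.single a 1 : Fin d → ℂ)) =
      Matrix.single a a 1 := by
  ext i j
  simp only [vecMulVec_apply, Pi.star_apply, Pi.single_apply, Matrix.single, of_apply]
  by_cases hia : i = a <;> by_cases hja : j = a <;> simp_all [eq_comm]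

lemma povmAux_Eab (a b : Fin d) (hab : a ≠ b) :
    vecMulVec ((Pi.single a 1 : Fin d → ℂ) + Pi.single b 1)
        (star ((Pi.single a 1 : Fin d → ℂ) + Pi.single b 1)) =
      Matrix.single a a 1 + Matrix.single a b 1 + Matrix.single b a 1 +
        Matrix.single b b 1 := by
  ext i j
  simp only [vecMulVec_apply, Pi.star_apply, Pi.add_apply, Pi.single_apply, Matrix.add_apply,
    Matrix.single, of_apply, star_add]
  by_cases hia : i = a <;> by_cases hib : i = b <;> by_cases hja : j = a <;> by_cases hjb : j = b <;>
    simp_all [eq_comm]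

lemma povmAux_Eba (a b : Fin d) (hab : a ≠ b) :
    vecMulVec ((Pi.single a 1 : Fin d → ℂ) - Complex.I • (Pi.single b 1 : Fin d → ℂ))
        (star ((Pi.single a 1 : Fin d → ℂ) - Complex.I • (Pi.single b 1 : Fin d → ℂ))) =
      Matrix.single a a 1 + Complex.I • Matrix.single a b 1 +
        (-Complex.I) • Matrix.single b a 1 + Matrix.single b b 1 := by
  ext i j
  simp only [vecMulVec_apply, Pi.star_apply, Pi.sub_apply, Pi.smul_apply, Pi.single_apply,
    Matrix.add_apply, Matrix.smul_apply, Matrix.single, of_apply, smul_eq_mul, star_sub, star_mul',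
    Complex.star_def, Complex.conj_I]
  by_cases hia : i = a <;> by_cases hib : i = b <;> by_cases hja : j = a <;> by_cases hjb : j = b <;>
    simp_all [eq_comm, Complex.conj_ofReal]

end PovmAux

/-- Normalizing the rank-1 family by S^{-1/2}, where
S = ∑ p_{nm}|f_{nm}⟩⟨f_{nm}| is positive definite, yields a rank-1 POVM with d²
effects that is extreme (linearly independent effects) and informationally
complete (effects span M_d(ℂ)). -/
theorem extreme_infoComplete_rank1_povm_construction
    (d : ℕ) (p : Fin d → Fin d → ℝ) (hp : ∀ n m, 0 < p n m)
    (f : Fin d → Fin d → Fin d → ℂ)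
    (hfd : ∀ n, f n n = (Pi.single n 1 : Fin d → ℂ))
    (hf1 : ∀ n m : Fin d, n < m → f n m = (Pi.single n 1 : Fin d → ℂ) + Pi.single m 1)
    (hf2 : ∀ n m : Fin d, n < m → f m n = (Pi.single n 1 : Fin d → ℂ) - Complex.I • (Pi.single m 1 : Fin d → ℂ))
    (S T : Matrix (Fin d) (Fin d) ℂ)
    (hS : S = ∑ n, ∑ m, (p n m : ℂ) • vecMulVec (f n m) (star (f n m)))
    (hT : T.PosSemidef) (hTS : T * S * T = 1)
    (M : Fin d → Fin d → Matrix (Fin d) (Fin d) ℂ)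
    (hM : ∀ n m, M n m =
      (p n m : ℂ) • vecMulVec (T.mulVec (f n m)) (star (T.mulVec (f n m)))) :
    S.PosDef ∧
    (∑ n, ∑ m, M n m = 1) ∧
    LinearIndependent ℂ (fun nm : Fin d × Fin d => M nm.1 nm.2) ∧
    Submodule.span ℂ (Set.range fun nm : Fin d × Fin d => M nm.1 nm.2) = ⊤ := by
  have hTh : Tᴴ = T := hT.isHermitian
  -- Part 1 : S is positive definite
  have hSposdef : S.PosDef := by
    rw [posDef_iff_dotProduct_mulVec]
    constructor
    · show Sᴴ = S
      rw [hS]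
      simp [Matrix.conjTranspose_sum, povmAux_herm, Complex.star_def, Complex.conj_ofReal]
    · intro x hx
      let φ : Matrix (Fin d) (Fin d) ℂ →ₗ[ℂ] ℂ :=
        { toFun := fun A => star x ⬝ᵥ A *ᵥ x
          map_add' := fun A B => by simp [Matrix.add_mulVec, dotProduct_add]
          map_smul' := fun c A => by simp [Matrix.smul_mulVec, dotProduct_smul] }
      show 0 < φ S
      have hφ : φ S = ∑ n, ∑ m,
          (p n m : ℂ) * ((star (f n m) ⬝ᵥ x) * star (star (f n m) ⬝ᵥ x)) := by
        rw [hS, map_sum]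
        refine Finset.sum_congr rfl fun n _ => ?_
        rw [map_sum]
        refine Finset.sum_congr rfl fun m _ => ?_
        show star x ⬝ᵥ ((p n m : ℂ) • vecMulVec (f n m) (star (f n m))) *ᵥ x = _
        rw [Matrix.smul_mulVec, dotProduct_smul, smul_eq_mul, povmAux_quad]
      rw [hφ]
      have hterm_nonneg : ∀ n m : Fin d,
          0 ≤ (p n m : ℂ) * ((star (f n m) ⬝ᵥ x) * star (star (f n m) ⬝ᵥ x)) := by
        intro n m
        refine mul_nonneg ?_ (mul_star_self_nonneg _)
        exact_mod_cast (hp n m).le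
      obtain ⟨n, hn⟩ : ∃ n, x n ≠ 0 := Function.ne_iff.mp hx
      refine Finset.sum_pos' (fun i _ => Finset.sum_nonneg fun m _ => hterm_nonneg i m)
        ⟨n, Finset.mem_univ n, ?_⟩
      refine Finset.sum_pos' (fun m _ => hterm_nonneg n m) ⟨n, Finset.mem_univ n, ?_⟩
      have hz : star (f n n) ⬝ᵥ x = x n := by
        simp [hfd n, dotProduct, Pi.single_apply, eq_comm]
      rw [hz]
      refine mul_pos ?_ ?_
      · exact_mod_cast hp n n
      · rw [Complex.star_def, Complex.mul_conj]
        exact_mod_cast Complex.normSq_pos.mpr hn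
  -- conjugation form of the effects
  have hconj : ∀ n m, M n m =
      T * ((p n m : ℂ) • vecMulVec (f n m) (star (f n m))) * T := by
    intro n m
    rw [hM, povmAux_conj T hTh]
    rw [Matrix.mul_smul, Matrix.smul_mul]
  -- Part 2 : the effects sum to the identity
  have hsum1 : ∑ n, ∑ m, M n m = 1 := by
    have : ∑ n, ∑ m, M n m =
        T * (∑ n, ∑ m, (p n m : ℂ) • vecMulVec (f n m) (star (f n m))) * T := by
      simp_rw [hconj, ← Finset.sum_mul, ← Finset.mul_sum]
    rw [this, ← hS, hTS]
  -- the inverse of T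
  have hTU : T * (S * T) = 1 := by rw [← Matrix.mul_assoc, hTS]
  have hUT : (S * T) * T = 1 := mul_eq_one_comm.mp hTU
  -- conjugation as a linear equivalence
  let Φ : Matrix (Fin d) (Fin d) ℂ →ₗ[ℂ] Matrix (Fin d) (Fin d) ℂ :=
    (LinearMap.mulLeft ℂ T).comp (LinearMap.mulRight ℂ T)
  let Ψ : Matrix (Fin d) (Fin d) ℂ →ₗ[ℂ] Matrix (Fin d) (Fin d) ℂ :=
    (LinearMap.mulLeft ℂ (S * T)).comp (LinearMap.mulRight ℂ (S * T))
  let e : Matrix (Fin d) (Fin d) ℂ ≃ₗ[ℂ] Matrix (Fin d) (Fin d) ℂ :=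
    LinearEquiv.ofLinear Φ Ψ
      (by
        refine LinearMap.ext fun A => ?_
        show T * (S * T * (A * (S * T)) * T) = A
        have h : T * (S * T * (A * (S * T)) * T) = (T * (S * T)) * A * ((S * T) * T) := by
          noncomm_ring
        rw [h, hTU, hUT, one_mul, mul_one])
      (by
        refine LinearMap.ext fun A => ?_
        show S * T * (T * (A * T) * (S * T)) = A
        have h : S * T * (T * (A * T) * (S * T)) = ((S * T) * T) * A * (T * (S * T)) := by
          noncomm_ring
        rw [h, hTU, hUT, one_mul, mul_one])
  -- the unnormalized effects
  set E : Fin d × Fin d → Matrix (Fin d) (Fin d) ℂ :=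
    fun nm => vecMulVec (f nm.1 nm.2) (star (f nm.1 nm.2)) with hE
  -- standard basis matrices lie in the span of the `E`s
  have key : ∀ n m : Fin d, n < m →
      Matrix.single n m (1 : ℂ) ∈ Submodule.span ℂ (Set.range E) ∧
      Matrix.single m n (1 : ℂ) ∈ Submodule.span ℂ (Set.range E) := by
    intro n m h
    have hne : n ≠ m := ne_of_lt h
    have hEnm : E (n, m) = Matrix.single n n 1 + Matrix.single n m 1 +
        Matrix.single m n 1 + Matrix.single m m 1 := by
      show vecMulVec (f n m) (star (f n m)) = _
      rw [hf1 n m h]; exact povmAux_Eab n m hne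
    have hEmn : E (m, n) = Matrix.single n n 1 + Complex.I • Matrix.single n m 1 +
        (-Complex.I) • Matrix.single m n 1 + Matrix.single m m 1 := by
      show vecMulVec (f m n) (star (f m n)) = _
      rw [hf2 n m h]; exact povmAux_Eba n m hne
    have hEnn : E (n, n) = Matrix.single n n 1 := by
      show vecMulVec (f n n) (star (f n n)) = _
      rw [hfd n]; exact povmAux_Eaa n
    have hEmm : E (m, m) = Matrix.single m m 1 := by
      show vecMulVec (f m m) (star (f m m)) = _
      rw [hfd m]; exact povmAux_Eaa m
    have memnm : E (n, m) ∈ Submodule.span ℂ (Set.range E) :=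
      Submodule.subset_span ⟨(n, m), rfl⟩
    have memmn : E (m, n) ∈ Submodule.span ℂ (Set.range E) :=
      Submodule.subset_span ⟨(m, n), rfl⟩
    have memnn : E (n, n) ∈ Submodule.span ℂ (Set.range E) :=
      Submodule.subset_span ⟨(n, n), rfl⟩
    have memmm : E (m, m) ∈ Submodule.span ℂ (Set.range E) :=
      Submodule.subset_span ⟨(m, m), rfl⟩
    constructor
    · have hid : Matrix.single n m (1 : ℂ) =
          (2 : ℂ)⁻¹ • (E (n, m) - E (n, n) - E (m, m)) +
          (2 : ℂ)⁻¹ • ((-Complex.I) • (E (m, n) - E (n, n) - E (m, m))) := by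
        rw [hEnm, hEmn, hEnn, hEmm]
        match_scalars <;>
          first
            | ring1
            | linear_combination ((2 : ℂ)⁻¹) * Complex.I_sq
            | linear_combination (-(2 : ℂ)⁻¹) * Complex.I_sq
      rw [hid]
      exact Submodule.add_mem _
        (Submodule.smul_mem _ _ (Submodule.sub_mem _ (Submodule.sub_mem _ memnm memnn) memmm))
        (Submodule.smul_mem _ _ (Submodule.smul_mem _ _
          (Submodule.sub_mem _ (Submodule.sub_mem _ memmn memnn) memmm)))
    · have hid : Matrix.single m n (1 : ℂ) =
          (2 : ℂ)⁻¹ • (E (n, m) - E (n, n) - E (m, m)) +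
          (2 : ℂ)⁻¹ • (Complex.I • (E (m, n) - E (n, n) - E (m, m))) := by
        rw [hEnm, hEmn, hEnn, hEmm]
        match_scalars <;>
          first
            | ring1
            | linear_combination ((2 : ℂ)⁻¹) * Complex.I_sq
            | linear_combination (-(2 : ℂ)⁻¹) * Complex.I_sq
      rw [hid]
      exact Submodule.add_mem _
        (Submodule.smul_mem _ _ (Submodule.sub_mem _ (Submodule.sub_mem _ memnm memnn) memmm))
        (Submodule.smul_mem _ _ (Submodule.smul_mem _ _
          (Submodule.sub_mem _ (Submodule.sub_mem _ memmn memnn) memmm)))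
  have hstd : ∀ a b : Fin d, Matrix.single a b (1 : ℂ) ∈ Submodule.span ℂ (Set.range E) := by
    intro a b
    rcases lt_trichotomy a b with h | rfl | h
    · exact (key a b h).1
    · have hEaa : E (a, a) = Matrix.single a a 1 := by
        show vecMulVec (f a a) (star (f a a)) = _
        rw [hfd a]; exact povmAux_Eaa a
      rw [← hEaa]
      exact Submodule.subset_span ⟨(a, a), rfl⟩
    · exact (key b a h).2
  have hspanEtop : ⊤ ≤ Submodule.span ℂ (Set.range E) := by
    intro A _
    rw [matrix_eq_sum_single A]
    refine Submodule.sum_mem _ fun i _ => Submodule.sum_mem _ fun j _ => ?_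
    have : Matrix.single i j (A i j) = A i j • Matrix.single i j (1 : ℂ) := by
      rw [smul_single, smul_eq_mul, mul_one]
    rw [this]
    exact Submodule.smul_mem _ _ (hstd i j)
  -- the normalized family spans too
  set g : Fin d × Fin d → Matrix (Fin d) (Fin d) ℂ :=
    fun nm => (p nm.1 nm.2 : ℂ) • E nm with hg
  have hspanG : ⊤ ≤ Submodule.span ℂ (Set.range g) := by
    refine le_trans hspanEtop (Submodule.span_le.mpr ?_)
    rintro _ ⟨nm, rfl⟩
    have hpne : (p nm.1 nm.2 : ℂ) ≠ 0 := by exact_mod_cast (hp nm.1 nm.2).ne'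
    have hEg : E nm = (p nm.1 nm.2 : ℂ)⁻¹ • g nm := by
      rw [hg]
      simp only
      rw [smul_smul, inv_mul_cancel₀ hpne, one_smul]
    rw [hEg]
    exact Submodule.smul_mem _ _ (Submodule.subset_span ⟨nm, rfl⟩)
  have hMe : (fun nm : Fin d × Fin d => M nm.1 nm.2) = fun nm => e (g nm) := by
    funext nm
    show M nm.1 nm.2 = T * (g nm * T)
    rw [hconj nm.1 nm.2, Matrix.mul_assoc]
  have hspanM : Submodule.span ℂ (Set.range fun nm : Fin d × Fin d => M nm.1 nm.2) = ⊤ := by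
    rw [hMe]
    have hr : Set.range (fun nm : Fin d × Fin d => e (g nm)) = e.toLinearMap '' Set.range g := by
      rw [← Set.range_comp]; rfl
    rw [hr, Submodule.span_image, top_le_iff.mp hspanG, Submodule.map_top,
      LinearEquiv.range]
  have hli : LinearIndependent ℂ (fun nm : Fin d × Fin d => M nm.1 nm.2) := by
    refine linearIndependent_of_top_le_span_of_card_eq_finrank (le_of_eq hspanM.symm) ?_
    simp [Module.finrank_matrix]
  exact ⟨hSposdef, hsum1, hli, hspanM⟩
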